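/- Let Σ ∈ ℝ^{m×m} be symmetric positive semidefinite with Σ·e_j = 0 for some index j, and let v > 0. Then J(Σ + v·e_j e_jᵀ) − J(Σ) = (1−λ)·log(1 + α_j v) − log(1 + v/σ²) + λ·β_j·v, where α_j = e_jᵀ(Σ_YY + Σ)⁻¹e_j and β_j = e_jᵀ Σ_YY⁻¹ e_j. (Rank-one cost-difference formula, eq. (32), used in the proof of Theorem 1.) -/

import Mathlib

open Matrix Real

/-- The attack cost `J(S) = (1-λ)·log det(Σ_YY + S) − log det(σ²·I_m + S) + λ·tr(Σ_YY⁻¹ S)`. -/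
noncomputable def attackCost (m : ℕ) (σ lam : ℝ)
    (Syy : Matrix (Fin m) (Fin m) ℝ) (S : Matrix (Fin m) (Fin m) ℝ) : ℝ :=
  (1 - lam) * Real.log (Syy + S).det
    - Real.log (σ ^ 2 • (1 : Matrix (Fin m) (Fin m) ℝ) + S).det
    + lam * (Syy⁻¹ * S).trace

lemma smul_std_eq_col_mul_row {m : ℕ} (j : Fin m) (v : ℝ) :
    v • Matrix.single j j (1:ℝ) =
      Matrix.replicateCol Unit (Pi.single j v) * Matrix.replicateRow Unit (Pi.single j (1:ℝ)) := by
  ext i k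
  simp [Matrix.mul_apply, Matrix.single, Matrix.replicateCol, Matrix.replicateRow, Pi.single_apply]
  by_cases hi : i = j <;> by_cases hk : k = j <;> simp_all [eq_comm]

lemma det_add_smul_std {m : ℕ} (A : Matrix (Fin m) (Fin m) ℝ) (hA : IsUnit A.det)
    (j : Fin m) (v : ℝ) :
    (A + v • Matrix.single j j (1:ℝ)).det =
      A.det * (1 + (Pi.single j 1 ⬝ᵥ A⁻¹.mulVec (Pi.single j 1)) * v) := by
  rw [smul_std_eq_col_mul_row, Matrix.det_add_replicateCol_mul_replicateRow hA]
  congr 1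
  rw [Matrix.det_unique]
  simp [Matrix.mul_apply, Matrix.replicateRow, Matrix.replicateCol, Matrix.mulVec_single, dotProduct_single,
    single_dotProduct, Pi.single_apply, ite_mul, mul_ite, Finset.sum_ite_eq, Finset.sum_ite_eq']

lemma trace_mul_std {m : ℕ} (A : Matrix (Fin m) (Fin m) ℝ) (j : Fin m) :
    (A * Matrix.single j j (1:ℝ)).trace = A j j := by
  simp [Matrix.trace, Matrix.mul_apply, Matrix.single, Matrix.diag, ite_and, mul_ite,
    Finset.sum_ite_eq, Finset.sum_ite_eq']

/-- Rank-one cost-difference formula (eq. (32) in the proof of Theorem 1):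
`J(Σ + v·e_j e_jᵀ) − J(Σ) = (1−λ)·log(1 + α_j v) − log(1 + v/σ²) + λ·β_j·v`
where `α_j = e_jᵀ(Σ_YY + Σ)⁻¹e_j` and `β_j = e_jᵀ Σ_YY⁻¹ e_j`. -/
theorem rank_one_cost_difference
    (m : ℕ) (hm : 1 ≤ m) (σ lam : ℝ) (hσ : 0 < σ) (hlam : 1 ≤ lam)
    (Syy : Matrix (Fin m) (Fin m) ℝ) (hYY : Syy.PosDef)
    (S : Matrix (Fin m) (Fin m) ℝ) (hSsym : S.IsSymm) (hS : S.PosSemidef)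
    (j : Fin m) (hSj : S.mulVec (Pi.single j 1) = 0)
    (v : ℝ) (hv : 0 < v) :
    attackCost m σ lam Syy (S + v • Matrix.single j j 1)
      - attackCost m σ lam Syy S =
    (1 - lam) * Real.log (1 + (Pi.single j 1 ⬝ᵥ ((Syy + S)⁻¹).mulVec (Pi.single j 1)) * v)
      - Real.log (1 + v / σ ^ 2)
      + lam * (Pi.single j 1 ⬝ᵥ (Syy⁻¹).mulVec (Pi.single j 1)) * v := by
  have he0 : (Pi.single j 1 : Fin m → ℝ) ≠ 0 := by
    intro h
    have := congrFun h j
    simp at this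
  have hA : (Syy + S).PosDef := hYY.add_posSemidef hS
  have hAd : IsUnit (Syy + S).det := hA.det_pos.ne'.isUnit
  have hB : (σ ^ 2 • (1 : Matrix (Fin m) (Fin m) ℝ) + S).PosDef := by
    refine Matrix.PosDef.add_posSemidef ?_ hS
    rw [Matrix.smul_one_eq_diagonal]
    exact Matrix.posDef_diagonal_iff.mpr fun _ => by positivity
  have hBd : IsUnit (σ ^ 2 • (1 : Matrix (Fin m) (Fin m) ℝ) + S).det := hB.det_pos.ne'.isUnit
  set α : ℝ := Pi.single j 1 ⬝ᵥ ((Syy + S)⁻¹).mulVec (Pi.single j 1) with hα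
  have hαpos : 0 < α := by
    have := hA.inv.dotProduct_mulVec_pos he0
    simpa [hα] using this
  -- inverse of B applied to e_j
  have hBe : (σ ^ 2 • (1 : Matrix (Fin m) (Fin m) ℝ) + S).mulVec (Pi.single j 1)
      = σ ^ 2 • (Pi.single j 1 : Fin m → ℝ) := by
    rw [Matrix.add_mulVec, hSj, Matrix.smul_mulVec, Matrix.one_mulVec, add_zero]
  have hBinv : ((σ ^ 2 • (1 : Matrix (Fin m) (Fin m) ℝ) + S)⁻¹).mulVec (Pi.single j 1)
      = (σ ^ 2)⁻¹ • (Pi.single j 1 : Fin m → ℝ) := by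
    have h2 : (Pi.single j 1 : Fin m → ℝ)
        = (σ ^ 2 • (1 : Matrix (Fin m) (Fin m) ℝ) + S).mulVec ((σ ^ 2)⁻¹ • (Pi.single j 1 : Fin m → ℝ)) := by
      rw [Matrix.mulVec_smul, hBe, smul_smul, inv_mul_cancel₀ (by positivity), one_smul]
    calc ((σ ^ 2 • (1 : Matrix (Fin m) (Fin m) ℝ) + S)⁻¹).mulVec (Pi.single j 1)
        = ((σ ^ 2 • (1 : Matrix (Fin m) (Fin m) ℝ) + S)⁻¹).mulVec
            ((σ ^ 2 • (1 : Matrix (Fin m) (Fin m) ℝ) + S).mulVec ((σ ^ 2)⁻¹ • (Pi.single j 1 : Fin m → ℝ))) := by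
          rw [← h2]
      _ = (σ ^ 2)⁻¹ • (Pi.single j 1 : Fin m → ℝ) := by
          rw [Matrix.mulVec_mulVec, Matrix.nonsing_inv_mul _ hBd, Matrix.one_mulVec]
  have hβ : (Pi.single j 1 : Fin m → ℝ) ⬝ᵥ
      ((σ ^ 2 • (1 : Matrix (Fin m) (Fin m) ℝ) + S)⁻¹).mulVec (Pi.single j 1) = (σ ^ 2)⁻¹ := by
    rw [hBinv]
    simp [dotProduct_smul, single_dotProduct]
  -- determinant identities
  have hdet1 : (Syy + (S + v • Matrix.single j j (1:ℝ))).det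
      = (Syy + S).det * (1 + α * v) := by
    rw [← add_assoc]
    exact det_add_smul_std _ hAd j v
  have hdet2 : (σ ^ 2 • (1 : Matrix (Fin m) (Fin m) ℝ) + (S + v • Matrix.single j j (1:ℝ))).det
      = (σ ^ 2 • (1 : Matrix (Fin m) (Fin m) ℝ) + S).det * (1 + v / σ ^ 2) := by
    rw [← add_assoc, det_add_smul_std _ hBd j v, hβ]
    ring_nf
  -- trace identity
  have htr : (Syy⁻¹ * (S + v • Matrix.single j j (1:ℝ))).trace
      = (Syy⁻¹ * S).trace + (Pi.single j 1 ⬝ᵥ (Syy⁻¹).mulVec (Pi.single j 1)) * v := by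
    rw [Matrix.mul_add, Matrix.trace_add, Matrix.mul_smul, Matrix.trace_smul, trace_mul_std]
    simp [Matrix.mulVec_single, single_dotProduct]
    ring
  have h1v : 0 < 1 + α * v := by positivity
  have h2v : 0 < 1 + v / σ ^ 2 := by positivity
  unfold attackCost
  rw [hdet1, hdet2, htr,
    Real.log_mul hA.det_pos.ne' h1v.ne',
    Real.log_mul hB.det_pos.ne' h2v.ne']
  ring
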